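/- Let E be a real inner product space (e.g. Euclidean space ℝⁿ), and let (Ω, 𝒜, ℙ) be a probability space. Let 0 < μ ≤ L and B ≥ 0, let F : E → ℝ and G : E → E satisfy both the L-smoothness inequality F(v) ≤ F(w) + ⟪v − w, G(w)⟫ + (L/2)·‖v − w‖² and the μ-strong-convexity inequality F(v) ≥ F(w) + ⟪v − w, G(w)⟫ + (μ/2)·‖v − w‖² for all v, w ∈ E, and let θ* ∈ E be a global minimizer of F. Let θ ∈ E, let f : Ω → E be Bochner square-integrable with mean ∫ f dℙ = G(θ) and variance ∫ ‖f(ω) − G(θ)‖² dℙ(ω) ≤ B, and let 0 < η ≤ 1/L. Then ∫ ‖θ − η·f(ω) − θ*‖² dℙ(ω) ≤ (1 − μη)·‖θ − θ*‖² + η²·B. -/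

import Mathlib

open RealInnerProductSpace MeasureTheory

theorem per_round_global_model_progress
    {E : Type*} [NormedAddCommGroup E] [InnerProductSpace ℝ E] [CompleteSpace E]
    {Ω : Type*} [MeasurableSpace Ω] (ℙ : Measure Ω) [IsProbabilityMeasure ℙ]
    (μ L B : ℝ) (hμ : 0 < μ) (hμL : μ ≤ L) (hB : 0 ≤ B)
    (F : E → ℝ) (G : E → E)
    (hsmooth : ∀ v w : E, F v ≤ F w + ⟪v - w, G w⟫ + (L / 2) * ‖v - w‖ ^ 2)
    (hconvex : ∀ v w : E, F v ≥ F w + ⟪v - w, G w⟫ + (μ / 2) * ‖v - w‖ ^ 2)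
    (θstar : E) (hmin : ∀ v : E, F θstar ≤ F v)
    (θ : E) (f : Ω → E) (hf : MemLp f 2 ℙ)
    (hmean : ∫ ω, f ω ∂ℙ = G θ)
    (hvar : ∫ ω, ‖f ω - G θ‖ ^ 2 ∂ℙ ≤ B)
    (η : ℝ) (hη : 0 < η) (hηL : η ≤ 1 / L) :
    ∫ ω, ‖θ - η • f ω - θstar‖ ^ 2 ∂ℙ ≤ (1 - μ * η) * ‖θ - θstar‖ ^ 2 + η ^ 2 * B := by
  have hL : 0 < L := lt_of_lt_of_le hμ hμL
  set g := G θ with hg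
  set c : E := θ - η • g - θstar with hc
  -- integrability facts
  have hfi : Integrable f ℙ := hf.integrable one_le_two
  have hfg : Integrable (fun ω => f ω - g) ℙ := hfi.sub (integrable_const g)
  have hfg2 : MemLp (fun ω => f ω - g) 2 ℙ := hf.sub (memLp_const g)
  have hsq : Integrable (fun ω => ‖f ω - g‖ ^ 2) ℙ := by
    have h := hfg2.integrable_norm_rpow two_ne_zero ENNReal.ofNat_ne_top
    convert h using 2 with ω
    rw [ENNReal.toReal_ofNat, ← Real.rpow_natCast (‖f ω - g‖) 2]
    norm_num
  have hinner : Integrable (fun ω => ⟪c, f ω - g⟫) ℙ := hfg.const_inner c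
  -- pointwise expansion
  have hpt : ∀ ω, ‖θ - η • f ω - θstar‖ ^ 2
      = ‖c‖ ^ 2 - 2 * η * ⟪c, f ω - g⟫ + η ^ 2 * ‖f ω - g‖ ^ 2 := by
    intro ω
    have h1 : θ - η • f ω - θstar = c - η • (f ω - g) := by
      simp only [hc, smul_sub]; abel
    rw [h1, @norm_sub_sq_real, real_inner_smul_right, norm_smul]
    rw [mul_pow]
    have : ‖η‖ ^ 2 = η ^ 2 := by
      rw [Real.norm_eq_abs, sq_abs]
    rw [this]; ring
  -- integral of cross term vanishes
  have hcross : ∫ ω, ⟪c, f ω - g⟫ ∂ℙ = 0 := by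
    rw [integral_inner hfg c]
    have : ∫ ω, (f ω - g) ∂ℙ = 0 := by
      rw [integral_sub hfi (integrable_const g), hmean, integral_const]
      simp
    rw [this, inner_zero_right]
  -- compute the integral
  have hint : ∫ ω, ‖θ - η • f ω - θstar‖ ^ 2 ∂ℙ
      = ‖c‖ ^ 2 + η ^ 2 * ∫ ω, ‖f ω - g‖ ^ 2 ∂ℙ := by
    calc ∫ ω, ‖θ - η • f ω - θstar‖ ^ 2 ∂ℙ
        = ∫ ω, (‖c‖ ^ 2 - 2 * η * ⟪c, f ω - g⟫ + η ^ 2 * ‖f ω - g‖ ^ 2) ∂ℙ := by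
          exact integral_congr_ae (Filter.Eventually.of_forall hpt)
      _ = ∫ ω, (‖c‖ ^ 2 - 2 * η * ⟪c, f ω - g⟫) ∂ℙ + ∫ ω, η ^ 2 * ‖f ω - g‖ ^ 2 ∂ℙ := by
          exact integral_add ((integrable_const _).sub ((hinner.const_mul _))) (hsq.const_mul _)
      _ = ‖c‖ ^ 2 + η ^ 2 * ∫ ω, ‖f ω - g‖ ^ 2 ∂ℙ := by
          rw [integral_sub (integrable_const _) (hinner.const_mul _), integral_const,
            integral_const_mul, hcross, integral_const_mul]
          simp
  -- deterministic contraction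
  have hGopt : (1 / (2 * L)) * ‖g‖ ^ 2 ≤ F θ - F θstar := by
    have h := hsmooth (θ - (1 / L) • g) θ
    have hv : θ - (1 / L) • g - θ = -((1 / L) • g) := by abel
    rw [hv] at h
    have h2 : F (θ - (1 / L) • g) ≤ F θ - (1 / (2 * L)) * ‖g‖ ^ 2 := by
      rw [inner_neg_left, real_inner_smul_left, real_inner_self_eq_norm_sq] at h
      rw [norm_neg, norm_smul, Real.norm_eq_abs, abs_of_pos (by positivity : (0:ℝ) < 1 / L),
        mul_pow] at h
      calc F (θ - (1 / L) • g) ≤ F θ + -(1 / L * ‖g‖ ^ 2) + L / 2 * ((1 / L) ^ 2 * ‖g‖ ^ 2) := h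
        _ = F θ - (1 / (2 * L)) * ‖g‖ ^ 2 := by field_simp; ring
    have := hmin (θ - (1 / L) • g)
    linarith
  have hsc : ⟪θ - θstar, g⟫ ≥ F θ - F θstar + (μ / 2) * ‖θ - θstar‖ ^ 2 := by
    have h := hconvex θstar θ
    have h1 : ⟪θstar - θ, g⟫ = -⟪θ - θstar, g⟫ := by
      rw [← inner_neg_left]; congr 1; abel
    have h2 : ‖θstar - θ‖ = ‖θ - θstar‖ := norm_sub_rev _ _
    rw [h1, h2] at h
    linarith
  have hgsq : (0:ℝ) ≤ ‖g‖ ^ 2 := by positivity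
  have hηg : (η / 2) * ‖g‖ ^ 2 ≤ (1 / (2 * L)) * ‖g‖ ^ 2 := by
    apply mul_le_mul_of_nonneg_right _ hgsq
    rw [div_le_div_iff₀ (by norm_num) (by positivity)]
    calc η * (2 * L) = (η * L) * 2 := by ring
      _ ≤ 1 * 2 := by
        have : η * L ≤ 1 := (le_div_iff₀ hL).mp hηL
        linarith
  have hkey : ⟪θ - θstar, g⟫ ≥ (μ / 2) * ‖θ - θstar‖ ^ 2 + (η / 2) * ‖g‖ ^ 2 := by
    have hFd : F θ - F θstar ≥ (1 / (2 * L)) * ‖g‖ ^ 2 := hGopt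
    linarith
  have hdet : ‖c‖ ^ 2 ≤ (1 - μ * η) * ‖θ - θstar‖ ^ 2 := by
    have h1 : c = (θ - θstar) - η • g := by rw [hc]; abel
    rw [h1, @norm_sub_sq_real, real_inner_smul_right, norm_smul, Real.norm_eq_abs,
      mul_pow, sq_abs]
    nlinarith [hkey, sq_nonneg η, hgsq]
  rw [hint]
  have hvar' : η ^ 2 * ∫ ω, ‖f ω - g‖ ^ 2 ∂ℙ ≤ η ^ 2 * B :=
    mul_le_mul_of_nonneg_left hvar (by positivity)
  linarith
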